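/- A nilpotent endomorphism x of an n-dimensional vector space V fixes a unique complete flag (V = V_1 ⊃ ⋯ ⊃ V_{n+1} = 0 with x(V_l) ⊆ V_{l+1}) if and only if x is regular nilpotent, in which case V_l = im(x^{l−1}). -/

import Mathlib

open Module

/-- A complete flag `V = W_0 ⊃ W_1 ⊃ ⋯ ⊃ W_n = 0` in an `n`-dimensional space,
encoded as a decreasing chain of submodules with one-dimensional successive
quotients (indexed from `0`, so `W l` has dimension `n - l`). -/
def IsCompleteFlag {V : Type} [AddCommGroup V] [Module ℂ V] (n : ℕ)
    (W : ℕ → Submodule ℂ V) : Prop :=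
  W 0 = ⊤ ∧ (∀ l, W (l + 1) ≤ W l) ∧ (∀ l, n ≤ l → W l = ⊥) ∧
    (∀ l, finrank ℂ (W l) = n - l)

section Aux

variable {V : Type} [AddCommGroup V] [Module ℂ V]

lemma range_pow_succ (x : Module.End ℂ V) (l : ℕ) :
    LinearMap.range (x ^ (l + 1)) = (LinearMap.range (x ^ l)).map x := by
  rw [pow_succ', Module.End.mul_eq_comp, LinearMap.range_comp]

lemma range_pow_antitone (x : Module.End ℂ V) (l : ℕ) :
    LinearMap.range (x ^ (l + 1)) ≤ LinearMap.range (x ^ l) := by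
  rw [pow_succ, Module.End.mul_eq_comp]
  exact LinearMap.range_comp_le_range _ _

lemma pow_ne_zero_of_le {x : Module.End ℂ V} {l m : ℕ} (h : l ≤ m) (hm : x ^ m ≠ 0) :
    x ^ l ≠ 0 := by
  intro h0
  apply hm
  rw [← Nat.add_sub_cancel' h, pow_add, h0, zero_mul]

lemma rank_mul_ge [FiniteDimensional ℂ V] (f g : Module.End ℂ V) :
    finrank ℂ (LinearMap.range g) ≤
      finrank ℂ (LinearMap.range (f * g)) + finrank ℂ (LinearMap.ker f) := by
  have h := (f.domRestrict (LinearMap.range g)).finrank_range_add_finrank_ker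
  rw [LinearMap.range_domRestrict, LinearMap.ker_domRestrict] at h
  have h2 : finrank ℂ (Submodule.comap (LinearMap.range g).subtype (LinearMap.ker f)) ≤
      finrank ℂ (LinearMap.ker f) := by
    rw [← Submodule.finrank_map_subtype_eq (LinearMap.range g), Submodule.map_comap_subtype]
    exact Submodule.finrank_mono inf_le_right
  have h3 : LinearMap.range (f * g) = (LinearMap.range g).map f := by
    rw [Module.End.mul_eq_comp, LinearMap.range_comp]
  rw [h3]
  omega

lemma rank_pow_ge_ker [FiniteDimensional ℂ V] (x : Module.End ℂ V) (l : ℕ) :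
    finrank ℂ V ≤ finrank ℂ (LinearMap.range (x ^ l)) + l * finrank ℂ (LinearMap.ker x) := by
  induction l with
  | zero =>
    rw [pow_zero, Module.End.one_eq_id, LinearMap.range_id, finrank_top]
    omega
  | succ l ih =>
    have h := rank_mul_ge x (x ^ l)
    rw [← pow_succ'] at h
    have : (l + 1) * finrank ℂ (LinearMap.ker x) =
        l * finrank ℂ (LinearMap.ker x) + finrank ℂ (LinearMap.ker x) := by ring
    omega

lemma rank_pow_strict [FiniteDimensional ℂ V] {x : Module.End ℂ V} (hnil : IsNilpotent x)
    {l : ℕ} (hl : x ^ l ≠ 0) :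
    finrank ℂ (LinearMap.range (x ^ (l + 1))) < finrank ℂ (LinearMap.range (x ^ l)) := by
  by_contra h
  push_neg at h
  have hle := range_pow_antitone x l
  have heq : LinearMap.range (x ^ (l + 1)) = LinearMap.range (x ^ l) :=
    Submodule.eq_of_le_of_finrank_eq hle (le_antisymm (Submodule.finrank_mono hle) h)
  have hstab : ∀ m, LinearMap.range (x ^ (l + m)) = LinearMap.range (x ^ l) := by
    intro m
    induction m with
    | zero => rfl
    | succ m ih =>
      have : l + (m + 1) = (l + m) + 1 := by omega
      rw [this, range_pow_succ, ih, ← range_pow_succ, heq]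
  obtain ⟨k, hk⟩ := hnil
  have hb : LinearMap.range (x ^ (l + k)) = ⊥ := by
    rw [pow_add, hk, mul_zero]
    exact LinearMap.range_eq_bot.mpr rfl
  rw [hstab k] at hb
  exact hl (LinearMap.range_eq_bot.mp hb)

lemma rank_pow_le [FiniteDimensional ℂ V] {x : Module.End ℂ V} (hnil : IsNilpotent x)
    {n : ℕ} (hdim : finrank ℂ V = n) (l : ℕ) :
    finrank ℂ (LinearMap.range (x ^ l)) ≤ n - l := by
  induction l with
  | zero =>
    rw [pow_zero, Module.End.one_eq_id, LinearMap.range_id, finrank_top, hdim]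
    omega
  | succ l ih =>
    by_cases h : x ^ l = 0
    · have : x ^ (l + 1) = 0 := by rw [pow_succ, h, zero_mul]
      rw [this, LinearMap.range_zero]
      simp
    · have := rank_pow_strict hnil h
      omega

lemma pow_dim_eq_zero [FiniteDimensional ℂ V] {x : Module.End ℂ V} (hnil : IsNilpotent x)
    {n : ℕ} (hdim : finrank ℂ V = n) : x ^ n = 0 := by
  have h := rank_pow_le hnil hdim n
  rw [Nat.sub_self, Nat.le_zero] at h
  exact LinearMap.range_eq_bot.mp (Submodule.finrank_eq_zero.mp h)

lemma regular_rank [FiniteDimensional ℂ V] {x : Module.End ℂ V} (hnil : IsNilpotent x)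
    {n : ℕ} (hn : 0 < n) (hdim : finrank ℂ V = n) (hreg : x ^ (n - 1) ≠ 0) (l : ℕ) :
    finrank ℂ (LinearMap.range (x ^ l)) = n - l := by
  have hne : ∀ m, m ≤ n - 1 → x ^ m ≠ 0 := fun m hm => pow_ne_zero_of_le hm hreg
  have key : ∀ j l, l + j = n - 1 → n - l ≤ finrank ℂ (LinearMap.range (x ^ l)) := by
    intro j
    induction j with
    | zero =>
      intro l hl
      have h1 : LinearMap.range (x ^ l) ≠ ⊥ := fun hb =>
        hne l (by omega) (LinearMap.range_eq_bot.mp hb)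
      have h2 : finrank ℂ (LinearMap.range (x ^ l)) ≠ 0 := fun h0 =>
        h1 (Submodule.finrank_eq_zero.mp h0)
      omega
    | succ j ih =>
      intro l hl
      have h1 := ih (l + 1) (by omega)
      have h2 := rank_pow_strict hnil (hne l (by omega))
      omega
  by_cases hl : l ≤ n - 1
  · exact le_antisymm (rank_pow_le hnil hdim l) (key (n - 1 - l) l (by omega))
  · have hxl : x ^ l = 0 := by
      rw [← Nat.add_sub_cancel' (show n ≤ l by omega), pow_add,
        pow_dim_eq_zero hnil hdim, zero_mul]
    have : LinearMap.range (x ^ l) = ⊥ := LinearMap.range_eq_bot.mpr hxl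
    rw [this]
    simp
    omega

lemma ker_coord_hyperplane [FiniteDimensional ℂ V] (R : Submodule ℂ V) {ι : Type}
    [Fintype ι] [DecidableEq ι] (b : Basis ι ℂ (V ⧸ R)) (i : ι) :
    R ≤ LinearMap.ker ((b.coord i).comp R.mkQ) ∧
      finrank ℂ (LinearMap.ker ((b.coord i).comp R.mkQ)) = finrank ℂ V - 1 := by
  constructor
  · intro v hv
    simp only [LinearMap.mem_ker, LinearMap.comp_apply, Submodule.mkQ_apply]
    rw [(Submodule.Quotient.mk_eq_zero R).mpr hv]
    simp
  · obtain ⟨v, hv⟩ := R.mkQ_surjective (b i)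
    have hf : (b.coord i).comp R.mkQ ≠ 0 := by
      intro h0
      have h1 : ((b.coord i).comp R.mkQ) v = 0 := by rw [h0]; rfl
      rw [LinearMap.comp_apply, hv, Basis.coord_apply, b.repr_self,
        Finsupp.single_eq_same] at h1
      exact one_ne_zero h1
    have := Module.Dual.finrank_ker_add_one_of_ne_zero (f := (b.coord i).comp R.mkQ) hf
    omega

lemma exists_hyperplane [FiniteDimensional ℂ V] (R : Submodule ℂ V)
    (h : finrank ℂ R < finrank ℂ V) :
    ∃ H : Submodule ℂ V, R ≤ H ∧ finrank ℂ H = finrank ℂ V - 1 := by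
  have hq : 0 < finrank ℂ (V ⧸ R) := by
    have := R.finrank_quotient_add_finrank
    omega
  let b := finBasis ℂ (V ⧸ R)
  obtain ⟨h1, h2⟩ := ker_coord_hyperplane R b ⟨0, hq⟩
  exact ⟨_, h1, h2⟩

lemma exists_two_hyperplanes [FiniteDimensional ℂ V] (R : Submodule ℂ V)
    (h : finrank ℂ R + 2 ≤ finrank ℂ V) :
    ∃ H₁ H₂ : Submodule ℂ V, H₁ ≠ H₂ ∧ R ≤ H₁ ∧ R ≤ H₂ ∧
      finrank ℂ H₁ = finrank ℂ V - 1 ∧ finrank ℂ H₂ = finrank ℂ V - 1 := by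
  have hq : 2 ≤ finrank ℂ (V ⧸ R) := by
    have := R.finrank_quotient_add_finrank
    omega
  let b := finBasis ℂ (V ⧸ R)
  obtain ⟨h10, h11⟩ := ker_coord_hyperplane R b ⟨0, by omega⟩
  obtain ⟨h20, h21⟩ := ker_coord_hyperplane R b ⟨1, by omega⟩
  refine ⟨_, _, ?_, h10, h20, h11, h21⟩
  obtain ⟨v, hv⟩ := R.mkQ_surjective (b ⟨1, by omega⟩)
  intro heq
  have hv1 : v ∈ LinearMap.ker ((b.coord ⟨0, by omega⟩).comp R.mkQ) := by
    simp only [LinearMap.mem_ker, LinearMap.comp_apply, hv,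
      Basis.coord_apply, b.repr_self]
    rw [Finsupp.single_eq_of_ne (by simp [Fin.ext_iff])]
  rw [heq] at hv1
  simp only [LinearMap.mem_ker, LinearMap.comp_apply, hv,
    Basis.coord_apply, b.repr_self, Finsupp.single_eq_same] at hv1
  exact one_ne_zero hv1

lemma exists_hyperplane_nilpotent [FiniteDimensional ℂ V] (y : Module.End ℂ V)
    (hy : IsNilpotent y) :
    ∃ H : Submodule ℂ V, LinearMap.range y ≤ H ∧ finrank ℂ H = finrank ℂ V - 1 := by
  rcases subsingleton_or_nontrivial V with hV | hV
  · refine ⟨⊥, ?_, ?_⟩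
    · intro v _
      exact (Subsingleton.elim v 0) ▸ Submodule.zero_mem ⊥
    · simp [finrank_zero_of_subsingleton]
  · apply exists_hyperplane
    apply Submodule.finrank_lt
    show LinearMap.range y ≠ ⊤
    intro htop
    obtain ⟨k, hk⟩ := hy
    have hpow : ∀ m, LinearMap.range (y ^ m) = ⊤ ∨ m = 0 := by
      intro m
      induction m with
      | zero => right; rfl
      | succ m ih =>
        left
        rw [range_pow_succ]
        rcases ih with h | h
        · rw [h, Submodule.map_top, htop]
        · rw [h]
          simp only [pow_zero, Module.End.one_eq_id, LinearMap.range_id, Submodule.map_top, htop]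
    rcases hpow (k + 1) with h | h
    · rw [pow_succ, hk, zero_mul] at h
      have : (⊥ : Submodule ℂ V) = ⊤ := by
        rw [← h]; exact (LinearMap.range_eq_bot.mpr rfl).symm
      exact (bot_ne_top this)
    · omega

lemma isNilpotent_restrict {x : Module.End ℂ V} (hx : IsNilpotent x) {H : Submodule ℂ V}
    (hmem : ∀ v ∈ H, x v ∈ H) : IsNilpotent (x.restrict hmem) := by
  obtain ⟨k, hk⟩ := hx
  refine ⟨k, ?_⟩
  ext v
  have := Module.End.pow_restrict (f' := x) (p := H) k hmem
  rw [this]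
  simp [LinearMap.restrict_apply, hk]

lemma exists_flag : ∀ (n : ℕ) (V : Type) [AddCommGroup V] [Module ℂ V]
    [FiniteDimensional ℂ V] (x : Module.End ℂ V), IsNilpotent x → finrank ℂ V = n →
    ∀ H : Submodule ℂ V, LinearMap.range x ≤ H → finrank ℂ H = n - 1 →
    ∃ W : ℕ → Submodule ℂ V, W 0 = ⊤ ∧ W 1 = H ∧ (∀ l, W (l + 1) ≤ W l) ∧
      (∀ l, n ≤ l → W l = ⊥) ∧ (∀ l, finrank ℂ (W l) = n - l) ∧
      (∀ l, Submodule.map x (W l) ≤ W (l + 1)) := by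
  intro n
  induction n with
  | zero =>
    intro V _ _ _ x hx hdim H hr hH
    have hsub : Subsingleton V := finrank_zero_iff.mp hdim
    have hbot : ∀ p : Submodule ℂ V, p = ⊥ := fun p => Subsingleton.elim p ⊥
    refine ⟨fun _ => ⊤, rfl, ?_, fun l => le_rfl, ?_, ?_, ?_⟩
    · rw [hbot H, hbot ⊤]
    · intro l _
      rw [hbot ⊤]
    · intro l
      rw [finrank_top, hdim]
      omega
    · intro l
      exact le_top
  | succ n ih =>
    intro V _ _ _ x hx hdim H hr hH
    simp only [Nat.add_sub_cancel] at hH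
    have hmem : ∀ v ∈ H, x v ∈ H := fun v _ => hr (LinearMap.mem_range_self x v)
    set x' := x.restrict hmem with hx'def
    have hx' : IsNilpotent x' := isNilpotent_restrict hx hmem
    obtain ⟨H', hH'r, hH'dim⟩ := exists_hyperplane_nilpotent x' hx'
    rw [hH] at hH'dim
    obtain ⟨W', h0, h1, hdec, hbot, hrk, hcomp⟩ := ih H x' hx' hH H' hH'r hH'dim
    have hcommute : ∀ p : Submodule ℂ H,
        Submodule.map x (p.map H.subtype) = (Submodule.map x' p).map H.subtype := by
      intro p
      rw [← Submodule.map_comp, ← Submodule.map_comp]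
      congr 1
    refine ⟨fun l => match l with | 0 => ⊤ | (l + 1) => (W' l).map H.subtype,
      rfl, ?_, ?_, ?_, ?_, ?_⟩
    · show (W' 0).map H.subtype = H
      rw [h0, Submodule.map_subtype_top]
    · intro l
      cases l with
      | zero => exact le_top
      | succ l => exact Submodule.map_mono (hdec l)
    · intro l hl
      cases l with
      | zero => omega
      | succ l =>
        show (W' l).map H.subtype = ⊥
        have : W' l = ⊥ := hbot l (by omega)
        rw [this, Submodule.map_bot]
    · intro l
      cases l with
      | zero =>
        show finrank ℂ (⊤ : Submodule ℂ V) = n + 1 - 0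
        rw [finrank_top, hdim]
        omega
      | succ l =>
        show finrank ℂ ((W' l).map H.subtype) = n + 1 - (l + 1)
        rw [Submodule.finrank_map_subtype_eq, hrk l]
        omega
    · intro l
      cases l with
      | zero =>
        show Submodule.map x ⊤ ≤ (W' 0).map H.subtype
        rw [h0, Submodule.map_subtype_top, Submodule.map_top]
        exact hr
      | succ l =>
        show Submodule.map x ((W' l).map H.subtype) ≤ (W' (l + 1)).map H.subtype
        rw [hcommute]
        exact Submodule.map_mono (hcomp l)

end Aux

section Main

variable {V : Type} [AddCommGroup V] [Module ℂ V]

lemma flag_eq_range [FiniteDimensional ℂ V] {n : ℕ} (hn : 0 < n) (hdim : finrank ℂ V = n)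
    {x : Module.End ℂ V} (hnil : IsNilpotent x) (hreg : x ^ (n - 1) ≠ 0)
    (W : ℕ → Submodule ℂ V)
    (hW : IsCompleteFlag n W ∧ ∀ l, Submodule.map x (W l) ≤ W (l + 1)) (l : ℕ) :
    W l = LinearMap.range (x ^ l) := by
  obtain ⟨⟨h0, hdec, hbot, hrk⟩, hcomp⟩ := hW
  have hle : ∀ l, LinearMap.range (x ^ l) ≤ W l := by
    intro l
    induction l with
    | zero => rw [h0]; exact le_top
    | succ l ih =>
      rw [range_pow_succ]
      exact (Submodule.map_mono ih).trans (hcomp l)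
  exact (Submodule.eq_of_le_of_finrank_eq (hle l)
    (by rw [regular_rank hnil hn hdim hreg l, hrk l])).symm

end Main

/-- A nilpotent endomorphism `x` of an `n`-dimensional space `V`
fixes a unique complete flag (i.e. a complete flag with `x (V_l) ⊆ V_{l+1}`)
if and only if `x` is regular nilpotent (`x^(n-1) ≠ 0`), in which case the flag
is given by `V_l = im (x^l)` (in our 0-indexed notation). -/
theorem unique_flag_iff_regular_nilpotent
    {V : Type} [AddCommGroup V] [Module ℂ V] (n : ℕ) (hn : 0 < n)
    (hdim : finrank ℂ V = n)
    (x : Module.End ℂ V) (hnil : IsNilpotent x) :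
    ((∃! W : ℕ → Submodule ℂ V,
        IsCompleteFlag n W ∧ ∀ l, Submodule.map x (W l) ≤ W (l + 1))
      ↔ x ^ (n - 1) ≠ 0) ∧
    (x ^ (n - 1) ≠ 0 →
      ∀ W : ℕ → Submodule ℂ V,
        (IsCompleteFlag n W ∧ ∀ l, Submodule.map x (W l) ≤ W (l + 1)) →
        ∀ l, W l = LinearMap.range (x ^ l)) := by
  have hfin : FiniteDimensional ℂ V := FiniteDimensional.of_finrank_pos (hdim ▸ hn)
  constructor
  · constructor
    · rintro ⟨Wu, hWu, huniq⟩
      intro hreg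
      -- from x^(n-1) = 0, the kernel has dimension ≥ 2
      have hchain := rank_pow_ge_ker x (n - 1)
      have hr0 : LinearMap.range (x ^ (n - 1)) = ⊥ := LinearMap.range_eq_bot.mpr hreg
      rw [hr0] at hchain
      simp only [finrank_bot, zero_add, hdim] at hchain
      set k := finrank ℂ (LinearMap.ker x) with hkdef
      have hk2 : 2 ≤ k := by
        by_contra hk
        push_neg at hk
        interval_cases k <;> omega
      have hrn := x.finrank_range_add_finrank_ker
      rw [hdim, ← hkdef] at hrn
      obtain ⟨H₁, H₂, hne, hle1, hle2, hd1, hd2⟩ :=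
        exists_two_hyperplanes (LinearMap.range x) (by omega)
      rw [hdim] at hd1 hd2
      obtain ⟨W₁, _, hW11, hdec1, hbot1, hrk1, hcomp1⟩ :=
        exists_flag n V x hnil hdim H₁ hle1 hd1
      obtain ⟨W₂, _, hW21, hdec2, hbot2, hrk2, hcomp2⟩ :=
        exists_flag n V x hnil hdim H₂ hle2 hd2
      have he1 : W₁ = Wu := huniq W₁ ⟨⟨‹W₁ 0 = ⊤›, hdec1, hbot1, hrk1⟩, hcomp1⟩
      have he2 : W₂ = Wu := huniq W₂ ⟨⟨‹W₂ 0 = ⊤›, hdec2, hbot2, hrk2⟩, hcomp2⟩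
      apply hne
      rw [← hW11, ← hW21, he1, he2]
    · intro hreg
      refine ⟨fun l => LinearMap.range (x ^ l), ⟨⟨?_, ?_, ?_, ?_⟩, ?_⟩, ?_⟩
      · show LinearMap.range (x ^ 0) = ⊤
        rw [pow_zero, Module.End.one_eq_id, LinearMap.range_id]
      · exact range_pow_antitone x
      · intro l hl
        apply LinearMap.range_eq_bot.mpr
        rw [← Nat.add_sub_cancel' hl, pow_add, pow_dim_eq_zero hnil hdim, zero_mul]
      · exact regular_rank hnil hn hdim hreg
      · intro l
        exact le_of_eq (range_pow_succ x l).symm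
      · intro W hW
        exact funext (flag_eq_range hn hdim hnil hreg W hW)
  · intro hreg W hW
    exact flag_eq_range hn hdim hnil hreg W hW
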